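/- arXiv:2307.00297 — 3 statements merged into one kernel-verified Lean document; each statement's English description precedes it below -/
import Mathlib

section
/- Let F be a subfield of the algebraic numbers such that the set of algebraic integers in F has Northcott number C with respect to the house. Then the set X of algebraic integers of degree at most d over F satisfies N_house(X) ≥ C^(1/d)/2^d. -/
noncomputable section

/-- The field of algebraic numbers. -/
abbrev Qbar := AlgebraicClosure ℚ

/-- The Mahler measure of an integer polynomial: absolute value of the leading
coefficient times the product of `max 1 |root|` over its complex roots. -/
noncomputable def mahlerMeasure (f : Polynomial ℤ) : ℝ :=
  ‖(f.map (Int.castRingHom ℂ)).leadingCoeff‖ *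
    (((f.map (Int.castRingHom ℂ)).roots.map (fun z => max 1 ‖z‖)).prod)

/-- The absolute logarithmic Weil height of an algebraic number, defined as
`(1/d) log M(f)` where `f` is the primitive integer minimal polynomial. -/
noncomputable def weilHeight (x : Qbar) : ℝ :=
  (((minpoly ℚ x).natDegree : ℝ))⁻¹ *
    Real.log (mahlerMeasure ((IsLocalization.integerNormalization (nonZeroDivisors ℤ)
      (minpoly ℚ x)).primPart))

/-- The Northcott number of a subset `S ⊆ Q̄` with respect to `f`. -/
noncomputable def northcott (f : Qbar → ℝ) (S : Set Qbar) : EReal :=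
  sInf ((fun r : ℝ => (r : EReal)) '' {r : ℝ | 0 ≤ r ∧ {x | x ∈ S ∧ f x < r}.Infinite})

/-- The degree of an algebraic number over ℚ. -/
noncomputable def degQ (x : Qbar) : ℕ := (minpoly ℚ x).natDegree

/-- The house of an algebraic number: the maximum modulus of its conjugates. -/
noncomputable def house (x : Qbar) : ℝ :=
  ((((minpoly ℚ x).aroots ℂ)).map (fun z : ℂ => ‖z‖)).toList.foldr max 0

/-! ### Auxiliary lemmas -/

open Polynomial

lemma foldr_max_nonneg (l : List ℝ) : 0 ≤ l.foldr max 0 := by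
  induction l with
  | nil => simp
  | cons a t ih => simpa using Or.inr ih

lemma le_foldr_max {l : List ℝ} {a : ℝ} (h : a ∈ l) : a ≤ l.foldr max 0 := by
  induction l with
  | nil => simp at h
  | cons b t ih =>
    rcases List.mem_cons.mp h with rfl | h
    · simp [le_max_iff]
    · simpa [le_max_iff] using Or.inr (ih h)

lemma foldr_max_le {l : List ℝ} {B : ℝ} (hB : 0 ≤ B) (h : ∀ a ∈ l, a ≤ B) :
    l.foldr max 0 ≤ B := by
  induction l with
  | nil => simpa
  | cons b t ih =>
    simp only [List.foldr_cons, max_le_iff]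
    exact ⟨h b List.mem_cons_self, ih fun a ha => h a (List.mem_cons_of_mem _ ha)⟩

lemma house_nonneg (x : Qbar) : 0 ≤ house x := foldr_max_nonneg _

lemma abs_root_le_house {x : Qbar} {z : ℂ} (hz : z ∈ (minpoly ℚ x).aroots ℂ) :
    ‖z‖ ≤ house x :=
  le_foldr_max (by
    rw [Multiset.mem_toList, Multiset.mem_map]
    exact ⟨z, hz, rfl⟩)

lemma house_le {x : Qbar} {B : ℝ} (hB : 0 ≤ B)
    (h : ∀ z ∈ (minpoly ℚ x).aroots ℂ, ‖z‖ ≤ B) : house x ≤ B := by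
  apply foldr_max_le hB
  intro a ha
  rw [Multiset.mem_toList, Multiset.mem_map] at ha
  obtain ⟨z, hz, rfl⟩ := ha
  exact h z hz

lemma exists_algHom_of_root {x : Qbar} {z : ℂ} (hz : z ∈ (minpoly ℚ x).aroots ℂ) :
    ∃ ψ : Qbar →ₐ[ℚ] ℂ, ψ x = z := by
  haveI : Algebra.IsAlgebraic ℚ Qbar := AlgebraicClosure.isAlgebraic ℚ
  have h := Algebra.IsAlgebraic.range_eval_eq_rootSet_minpoly (F := ℚ) (A := ℂ) x
  have : z ∈ (minpoly ℚ x).rootSet ℂ := by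
    rw [Polynomial.mem_rootSet]
    exact (Polynomial.mem_aroots.mp hz)
  rw [← h] at this
  exact this

lemma multiset_prod_le_pow (s : Multiset ℝ) (B : ℝ) (hB : 0 ≤ B)
    (h : ∀ a ∈ s, 0 ≤ a ∧ a ≤ B) : s.prod ≤ B ^ Multiset.card s := by
  induction s using Multiset.induction with
  | empty => simp
  | cons a t ih =>
    simp only [Multiset.prod_cons, Multiset.card_cons, pow_succ']
    have ha := h a (Multiset.mem_cons_self a t)
    have ht := ih fun b hb => h b (Multiset.mem_cons_of_mem hb)
    have htnn : 0 ≤ t.prod := Multiset.prod_nonneg fun b hb => (h b (Multiset.mem_cons_of_mem hb)).1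
    exact mul_le_mul ha.2 ht htnn hB

lemma one_le_house {x : Qbar} (hx : IsIntegral ℤ x) (h0 : x ≠ 0) : 1 ≤ house x := by
  have hQ : IsIntegral ℚ x := ((AlgebraicClosure.isAlgebraic ℚ).isAlgebraic x).isIntegral
  set q := minpoly ℚ x with hq
  have heq : q = (minpoly ℤ x).map (algebraMap ℤ ℚ) :=
    minpoly.isIntegrallyClosed_eq_field_fractions' ℚ hx
  set qC := q.map (algebraMap ℚ ℂ) with hqC
  have hmon : qC.Monic := (minpoly.monic hQ).map _
  have hsplits : Splits qC := IsAlgClosed.splits qC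
  have hcoeff : qC.coeff 0 = (((minpoly ℤ x).coeff 0 : ℤ) : ℂ) := by
    rw [hqC, heq, Polynomial.map_map, coeff_map]
    simp
  have hz : (minpoly ℤ x).coeff 0 ≠ 0 := by
    intro hc
    apply minpoly.coeff_zero_ne_zero hQ h0
    show q.coeff 0 = 0
    rw [heq, coeff_map, hc]
    simp
  have habs : 1 ≤ ‖qC.coeff 0‖ := by
    rw [hcoeff, Complex.norm_intCast]
    have := Int.one_le_abs hz
    rw [← Int.cast_abs]
    exact_mod_cast this
  have hprod : qC.coeff 0 = (-1) ^ qC.natDegree * qC.roots.prod :=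
    hsplits.coeff_zero_eq_prod_roots_of_monic hmon
  have habs2 : 1 ≤ (qC.roots.map (fun z => ‖z‖)).prod := by
    calc (1:ℝ) ≤ ‖qC.coeff 0‖ := habs
    _ = (qC.roots.map (fun z => ‖z‖)).prod := by
        rw [hprod, norm_mul, norm_pow, norm_neg, norm_one, one_pow, one_mul]
        exact map_multiset_prod normHom qC.roots
  have hroots : ∀ z ∈ qC.roots, ‖z‖ ≤ house x := fun z hz =>
    abs_root_le_house (by rwa [aroots_def])
  have hcard : Multiset.card qC.roots = q.natDegree := by
    rw [hqC, ← (IsAlgClosed.splits (q.map (algebraMap ℚ ℂ))).natDegree_eq_card_roots,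
      (minpoly.monic hQ).natDegree_map]
  by_contra hlt
  push_neg at hlt
  have hpow : ((qC.roots.map (fun z => ‖z‖)).prod : ℝ) ≤ (house x) ^ (Multiset.card qC.roots) := by
    have := multiset_prod_le_pow (qC.roots.map (fun z => ‖z‖)) (house x) (house_nonneg x) ?_
    · simpa using this
    · intro a ha
      obtain ⟨z, hzr, rfl⟩ := Multiset.mem_map.mp ha
      exact ⟨norm_nonneg _, hroots z hzr⟩
  have hd1 : Multiset.card qC.roots ≠ 0 := by
    rw [hcard]
    exact (minpoly.natDegree_pos hQ).ne'
  have : (house x) ^ (Multiset.card qC.roots) < 1 :=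
    pow_lt_one₀ (house_nonneg x) hlt hd1
  linarith

lemma nat_choose_le_two_pow (n i : ℕ) : n.choose i ≤ 2 ^ n := by
  rcases le_or_gt i n with h | h
  · calc n.choose i ≤ ∑ j ∈ Finset.range (n + 1), n.choose j :=
        Finset.single_le_sum (fun j _ => Nat.zero_le _) (Finset.mem_range.mpr (Nat.lt_succ_of_le h))
    _ = 2 ^ n := Nat.sum_range_choose n
  · rw [Nat.choose_eq_zero_of_lt h]
    exact Nat.zero_le _

variable (F : IntermediateField ℚ Qbar)

lemma minpoly_coeff_isIntegral {x : Qbar} (hx : IsIntegral ℤ x) (i : ℕ) :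
    IsIntegral ℤ ((minpoly F x).map (algebraMap F Qbar) |>.coeff i) := by
  set g := minpoly F x with hg
  set G := g.map (algebraMap F Qbar) with hG
  have hxF : IsIntegral F x := hx.tower_top
  have hGmon : G.Monic := (minpoly.monic hxF).map _
  have hdvd : g ∣ (minpoly ℚ x).map (algebraMap ℚ F) := minpoly.dvd_map_of_isScalarTower ℚ F x
  have heq : minpoly ℚ x = (minpoly ℤ x).map (algebraMap ℤ ℚ) :=
    minpoly.isIntegrallyClosed_eq_field_fractions' ℚ hx
  have hGdvd : G ∣ (minpoly ℤ x).map (algebraMap ℤ Qbar) := by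
    have := Polynomial.map_dvd (algebraMap F Qbar) hdvd
    rwa [Polynomial.map_map, ← IsScalarTower.algebraMap_eq, heq, Polynomial.map_map,
      ← IsScalarTower.algebraMap_eq] at this
  have hPne : (minpoly ℤ x).map (algebraMap ℤ Qbar) ≠ 0 :=
    ((minpoly.monic hx).map _).ne_zero
  have hroots : ∀ z ∈ G.roots, IsIntegral ℤ z := by
    intro z hz
    have hz' : z ∈ ((minpoly ℤ x).map (algebraMap ℤ Qbar)).roots :=
      Multiset.mem_of_le (Polynomial.roots.le_of_dvd hPne hGdvd) hz
    refine ⟨minpoly ℤ x, minpoly.monic hx, ?_⟩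
    have := isRoot_of_mem_roots hz'
    rwa [IsRoot.def, eval_map, ← aeval_def] at this
  have hsplit : G = (G.roots.map fun a => X - C a).prod :=
    (IsAlgClosed.splits G).eq_prod_roots_of_monic hGmon
  rcases le_or_gt i (Multiset.card G.roots) with h | h
  · have hcoeff : G.coeff i =
        (-1) ^ (Multiset.card G.roots - i) * G.roots.esymm (Multiset.card G.roots - i) := by
      conv_lhs => rw [hsplit]
      exact Multiset.prod_X_sub_C_coeff G.roots h
    rw [hcoeff]
    have : G.roots.esymm (Multiset.card G.roots - i) ∈ integralClosure ℤ Qbar := by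
      apply Subalgebra.multiset_sum_mem
      intro a ha
      obtain ⟨t, ht, rfl⟩ := Multiset.mem_map.mp ha
      apply Subalgebra.multiset_prod_mem
      intro b hb
      exact hroots b (Multiset.mem_of_le (Multiset.mem_powersetCard.mp ht).1 hb)
    have hneg : ((-1 : Qbar) ^ (Multiset.card G.roots - i)) ∈ integralClosure ℤ Qbar :=
      pow_mem (neg_mem (one_mem _)) _
    exact mul_mem hneg this
  · have : G.natDegree < i := by
      rwa [← (splits_iff_card_roots (f := G)).mp (IsAlgClosed.splits G)]
    rw [coeff_eq_zero_of_natDegree_lt this]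
    exact isIntegral_zero

lemma house_coeff_lt {x : Qbar} (hx : IsIntegral ℤ x) {d : ℕ} (hdd : 1 ≤ d)
    (hdeg : (minpoly F x).natDegree ≤ d) {r : ℝ} (h1r : 1 < r) (hxr : house x < r) (i : ℕ) :
    house ((minpoly F x).map (algebraMap F Qbar) |>.coeff i) < 2 ^ d * r ^ d := by
  set g := minpoly F x with hg
  have hxF : IsIntegral F x := hx.tower_top
  set c := (g.map (algebraMap F Qbar)).coeff i with hc
  set b0 : ℝ := (max 1 (house x)) ^ d * 2 ^ d with hb0
  have hb0nn : 0 ≤ b0 := by positivity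
  have key : ∀ z ∈ (minpoly ℚ c).aroots ℂ, ‖z‖ ≤ b0 := by
    intro z hz
    obtain ⟨ψ, hψ⟩ := exists_algHom_of_root hz
    set ρ : F →+* ℂ := (ψ.toRingHom).comp (algebraMap F Qbar) with hρ
    have hzc : (g.map ρ).coeff i = z := by
      rw [hρ, ← Polynomial.map_map, coeff_map]
      exact hψ
    have hbound : ∀ w ∈ (g.map ρ).roots, ‖w‖ ≤ house x := by
      intro w hw
      have hdvd : g ∣ (minpoly ℚ x).map (algebraMap ℚ F) := minpoly.dvd_map_of_isScalarTower ℚ F x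
      have hdvd2 : g.map ρ ∣ (minpoly ℚ x).map (algebraMap ℚ ℂ) := by
        have := Polynomial.map_dvd ρ hdvd
        rwa [Polynomial.map_map, Subsingleton.elim (ρ.comp (algebraMap ℚ F)) (algebraMap ℚ ℂ)]
          at this
      have hqCne : (minpoly ℚ x).map (algebraMap ℚ ℂ) ≠ 0 :=
        ((minpoly.monic ((AlgebraicClosure.isAlgebraic ℚ).isAlgebraic x).isIntegral).map _).ne_zero
      have hw' : w ∈ (minpoly ℚ x).aroots ℂ := by
        rw [aroots_def]
        exact Multiset.mem_of_le (Polynomial.roots.le_of_dvd hqCne hdvd2) hw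
      exact abs_root_le_house hw'
    have hcf : ‖(g.map ρ).coeff i‖ ≤ (house x) ^ (g.natDegree - i) * (g.natDegree.choose i) :=
      coeff_le_of_roots_le i (minpoly.monic hxF) (IsAlgClosed.splits _) hbound
    have h1 : (house x) ^ (g.natDegree - i) ≤ (max 1 (house x)) ^ d := by
      calc (house x) ^ (g.natDegree - i) ≤ (max 1 (house x)) ^ (g.natDegree - i) := by
            gcongr
            · exact house_nonneg x
            · exact le_max_right _ _
      _ ≤ (max 1 (house x)) ^ d :=
            pow_le_pow_right₀ (le_max_left _ _) (le_trans (Nat.sub_le _ _) hdeg)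
    have h2 : ((g.natDegree.choose i : ℕ) : ℝ) ≤ (2 : ℝ) ^ d := by
      calc ((g.natDegree.choose i : ℕ) : ℝ) ≤ ((2 ^ g.natDegree : ℕ) : ℝ) := by
            exact_mod_cast nat_choose_le_two_pow g.natDegree i
      _ ≤ (2 : ℝ) ^ d := by
            rw [Nat.cast_pow]
            exact pow_le_pow_right₀ (by norm_num) hdeg
    calc ‖z‖ = ‖(g.map ρ).coeff i‖ := by rw [hzc]
    _ ≤ (house x) ^ (g.natDegree - i) * (g.natDegree.choose i) := hcf
    _ ≤ (max 1 (house x)) ^ d * 2 ^ d := by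
        apply mul_le_mul h1 h2 (by positivity) (by positivity)
  have hlt : b0 < 2 ^ d * r ^ d := by
    rw [hb0, mul_comm]
    have hmax : max 1 (house x) < r := max_lt h1r hxr
    have : (max 1 (house x)) ^ d < r ^ d :=
      pow_lt_pow_left₀ hmax (le_trans zero_le_one (le_max_left _ _)) (by omega)
    exact mul_lt_mul_of_pos_left this (by positivity)
  exact lt_of_le_of_lt (house_le hb0nn key) hlt

lemma final_arith {C r : ℝ} {d : ℕ} (hd : 1 ≤ d) (hC0 : 0 ≤ C) (h1r : 1 < r)
    (hCB : C ≤ 2 ^ d * r ^ d) : C ^ (1 / (d : ℝ)) / 2 ^ d ≤ r := by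
  have hdr : (d : ℝ) ≠ 0 := by positivity
  have hr0 : (0:ℝ) < r := lt_trans one_pos h1r
  have hinv : (d : ℝ) * (1 / (d : ℝ)) = 1 := by field_simp
  have h2 : ((2:ℝ) ^ d * r ^ d) ^ (1 / (d:ℝ)) = 2 * r := by
    rw [Real.mul_rpow (by positivity) (by positivity), ← Real.rpow_natCast 2 d,
      ← Real.rpow_natCast r d, ← Real.rpow_mul (by norm_num), ← Real.rpow_mul hr0.le,
      hinv, Real.rpow_one, Real.rpow_one]
  have h1 : C ^ (1 / (d:ℝ)) ≤ 2 * r := by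
    rw [← h2]
    exact Real.rpow_le_rpow hC0 hCB (by positivity)
  have h2d : (2:ℝ) ≤ 2 ^ d := by
    calc (2:ℝ) = 2 ^ 1 := (pow_one 2).symm
    _ ≤ 2 ^ d := pow_le_pow_right₀ (by norm_num) hd
  have h3 : (2:ℝ) * r / 2 ^ d ≤ r := by
    rw [div_le_iff₀ (by positivity)]
    nlinarith
  calc C ^ (1 / (d:ℝ)) / 2 ^ d ≤ 2 * r / 2 ^ d := by gcongr
  _ ≤ r := h3

/-- House version of the Northcott inequality. -/
theorem northcott_inequality_house (F : IntermediateField ℚ Qbar) (d : ℕ) (hd : 1 ≤ d)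
    (C : ℝ) (hC0 : 0 ≤ C)
    (hC : northcott house {x : Qbar | x ∈ F ∧ IsIntegral ℤ x} = (C : EReal)) :
    ((C ^ (1 / (d : ℝ)) / 2 ^ d : ℝ) : EReal) ≤
      northcott house
        {x : Qbar | IsIntegral ℤ x ∧ ∃ p : Polynomial F, p ≠ 0 ∧ p.natDegree ≤ d ∧
          Polynomial.aeval x p = 0} := by
  rw [northcott]
  apply le_sInf
  rintro b ⟨r, ⟨hr0, hrinf⟩, rfl⟩
  rw [EReal.coe_le_coe_iff]
  set X := {x : Qbar | IsIntegral ℤ x ∧ ∃ p : Polynomial F, p ≠ 0 ∧ p.natDegree ≤ d ∧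
    Polynomial.aeval x p = 0} with hX
  set S := {x | x ∈ X ∧ house x < r} with hS
  -- degree bound
  have hdeg : ∀ x ∈ X, (minpoly F x).natDegree ≤ d := by
    rintro x ⟨hxi, p, hp0, hpd, hpe⟩
    have h1 : (minpoly F x).degree ≤ p.degree := minpoly.degree_le_of_ne_zero F x hp0 hpe
    exact le_trans (natDegree_le_natDegree h1) hpd
  -- r > 1
  have h1r : 1 < r := by
    obtain ⟨x0, hx0S, hx0ne⟩ := (hrinf.diff (Set.finite_singleton 0)).nonempty
    simp only [Set.mem_diff, Set.mem_singleton_iff] at hx0ne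
    have h1 : 1 ≤ house x0 := one_le_house hx0S.1.1 hx0ne
    exact lt_of_le_of_lt h1 hx0S.2
  set B : ℝ := 2 ^ d * r ^ d with hB
  set TT := {y : Qbar | (y ∈ F ∧ IsIntegral ℤ y) ∧ house y < B} with hTT
  set Φ : Qbar → (Fin (d + 1) → Qbar) :=
    fun x i => ((minpoly F x).map (algebraMap F Qbar)).coeff i with hΦ
  -- fibers of Φ over S are finite
  have hfib : ∀ v : Fin (d + 1) → Qbar, {x | x ∈ S ∧ Φ x = v}.Finite := by
    intro v
    rcases Set.eq_empty_or_nonempty {x | x ∈ S ∧ Φ x = v} with he | ⟨x0, hx0⟩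
    · rw [he]; exact Set.finite_empty
    have hx0F : IsIntegral F x0 := hx0.1.1.1.tower_top
    have hne : (minpoly F x0).map (algebraMap F Qbar) ≠ 0 :=
      ((minpoly.monic hx0F).map _).ne_zero
    apply Set.Finite.subset (Polynomial.finite_setOf_isRoot hne)
    rintro x ⟨hxS, hxv⟩
    have hmineq : minpoly F x = minpoly F x0 := by
      have hcc : ∀ i : ℕ, ((minpoly F x).map (algebraMap F Qbar)).coeff i =
          ((minpoly F x0).map (algebraMap F Qbar)).coeff i := by
        intro i
        rcases le_or_gt i d with h | h
        · have := congrFun (hxv.trans hx0.2.symm) ⟨i, by omega⟩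
          exact this
        · rw [coeff_map, coeff_map,
            coeff_eq_zero_of_natDegree_lt (lt_of_le_of_lt (hdeg x hxS.1) h),
            coeff_eq_zero_of_natDegree_lt (lt_of_le_of_lt (hdeg x0 hx0.1.1) h)]
      apply Polynomial.ext
      intro n
      have := hcc n
      rw [coeff_map, coeff_map] at this
      exact (algebraMap F Qbar).injective this
    show ((minpoly F x0).map (algebraMap F Qbar)).IsRoot x
    rw [IsRoot.def, eval_map, ← aeval_def, ← hmineq, minpoly.aeval]
  -- the image of S under Φ is infinite
  have himg : (Φ '' S).Infinite := by
    intro hfin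
    apply hrinf
    have hcover : S ⊆ ⋃ v ∈ Φ '' S, {x | x ∈ S ∧ Φ x = v} := by
      intro x hx
      exact Set.mem_biUnion (Set.mem_image_of_mem Φ hx) ⟨hx, rfl⟩
    exact Set.Finite.subset (Set.Finite.biUnion hfin fun v _ => hfib v) hcover
  -- TT is infinite
  have hTTinf : TT.Infinite := by
    intro hfin
    apply himg
    apply Set.Finite.subset (Set.Finite.pi (fun _ : Fin (d + 1) => hfin))
    rintro v ⟨x, hxS, rfl⟩
    rw [Set.mem_pi]
    intro i _
    refine ⟨⟨?_, ?_⟩, ?_⟩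
    · show ((minpoly F x).map (algebraMap F Qbar)).coeff i ∈ F
      rw [coeff_map]
      exact SetLike.coe_mem _
    · exact minpoly_coeff_isIntegral F hxS.1.1 i
    · exact house_coeff_lt F hxS.1.1 hd (hdeg x hxS.1) h1r hxS.2 i
  -- C ≤ B
  have hCB : C ≤ B := by
    have hmem : (B : EReal) ∈ ((fun r : ℝ => (r : EReal)) ''
        {r : ℝ | 0 ≤ r ∧ {x | x ∈ {x : Qbar | x ∈ F ∧ IsIntegral ℤ x} ∧ house x < r}.Infinite}) := by
      refine ⟨B, ⟨by positivity, ?_⟩, rfl⟩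
      exact hTTinf
    have := sInf_le hmem
    rw [← northcott, hC] at this
    exact EReal.coe_le_coe_iff.mp this
  exact final_arith hd hC0 h1r hCB

end
end

section
/- The field of totally real algebraic numbers ℚ^tr has Northcott number at most log 2 with respect to the logarithmic Weil height. -/
noncomputable section

/-- The field of totally real algebraic numbers, as an intermediate field of `Q̄`. -/
def Qtr : IntermediateField ℚ Qbar :=
  Subfield.toIntermediateField
    { carrier := {x : Qbar | ∀ σ : Qbar →+* ℂ, ∃ r : ℝ, σ x = (r : ℂ)}
      mul_mem' := by
        intro a b ha hb σ
        obtain ⟨r, hr⟩ := ha σ; obtain ⟨s, hs⟩ := hb σ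
        exact ⟨r * s, by rw [map_mul, hr, hs]; push_cast; ring⟩
      one_mem' := fun σ => ⟨1, by simp⟩
      add_mem' := by
        intro a b ha hb σ
        obtain ⟨r, hr⟩ := ha σ; obtain ⟨s, hs⟩ := hb σ
        exact ⟨r + s, by rw [map_add, hr, hs]; push_cast; ring⟩
      zero_mem' := fun σ => ⟨0, by simp⟩
      neg_mem' := by
        intro a ha σ
        obtain ⟨r, hr⟩ := ha σ
        exact ⟨-r, by rw [map_neg, hr]; push_cast; ring⟩
      inv_mem' := by
        intro a ha σ
        obtain ⟨r, hr⟩ := ha σ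
        exact ⟨r⁻¹, by rw [map_inv₀, hr]; push_cast; ring⟩ }
    (by intro q σ; exact ⟨(q : ℝ), by simp [map_ratCast]⟩)

open Polynomial in
lemma multiset_prod_le {s : Multiset ℝ} (h : ∀ a ∈ s, 1 ≤ a ∧ a ≤ 2) :
    1 ≤ s.prod ∧ s.prod ≤ 2 ^ Multiset.card s := by
  induction s using Multiset.induction_on with
  | empty => simp
  | cons a s ih =>
    obtain ⟨h1, h2⟩ := h a (Multiset.mem_cons_self a s)
    obtain ⟨ih1, ih2⟩ := ih (fun b hb => h b (Multiset.mem_cons_of_mem hb))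
    rw [Multiset.prod_cons, Multiset.card_cons, pow_succ]
    constructor
    · nlinarith
    · rw [mul_comm (2 ^ Multiset.card s) 2]
      exact mul_le_mul h2 ih2 (by linarith) (by norm_num)

open Polynomial in
lemma weilHeight_le_log_two {x : Qbar} (hint : IsIntegral ℤ x)
    (hroots : ∀ z ∈ ((minpoly ℚ x).aroots ℂ), ‖z‖ ≤ 2) :
    weilHeight x ≤ Real.log 2 := by
  classical
  set F := minpoly ℤ x with hF
  have hFmonic : F.Monic := minpoly.monic hint
  have hQx : IsIntegral ℚ x := hint.tower_top
  have hQ : minpoly ℚ x = F.map (algebraMap ℤ ℚ) :=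
    minpoly.isIntegrallyClosed_eq_field_fractions ℚ Qbar hint
  obtain ⟨b, hb⟩ := IsLocalization.integerNormalization_map_to_map
    (nonZeroDivisors ℤ) (minpoly ℚ x)
  have hbne : (b : ℤ) ≠ 0 := nonZeroDivisors.coe_ne_zero b
  set p := IsLocalization.integerNormalization (nonZeroDivisors ℤ) (minpoly ℚ x) with hp
  have hpeq : p = C (b : ℤ) * F := by
    apply Polynomial.map_injective (algebraMap ℤ ℚ) (fun a b h => by exact_mod_cast h)
    rw [hb, hQ, Polynomial.map_mul, map_C]
    ext i
    simp [Polynomial.coeff_smul, coeff_C_mul, zsmul_eq_mul]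
  have hpc : C ((b : ℤ)) * F = C |(b : ℤ)| * p.primPart := by
    have h1 : p = C p.content * p.primPart := p.eq_C_content_mul_primPart
    have h2 : p.content = |(b : ℤ)| := by
      rw [hpeq, content_C_mul, hFmonic.isPrimitive.content_eq_one, mul_one,
        ← Int.abs_eq_normalize]
    rw [← h2, ← h1, hpeq]
  have habs : |(b : ℤ)| = b ∨ |(b : ℤ)| = -b := abs_choice _
  have hCb : (C ((b : ℤ)) : Polynomial ℤ) ≠ 0 := fun h => hbne (by
    simpa using (C_eq_zero.mp h))
  have hprim : p.primPart = F ∨ p.primPart = -F := by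
    rcases habs with h | h
    · left
      rw [h] at hpc
      exact (mul_left_cancel₀ hCb hpc).symm
    · right
      rw [h] at hpc
      apply (mul_left_cancel₀ (a := C (-(b:ℤ))) (by simpa using hCb) _).symm
      rw [← hpc, map_neg, neg_mul, mul_neg, neg_neg]
  -- Mahler measure of F
  have hmapF : F.map (Int.castRingHom ℂ) = (minpoly ℚ x).map (algebraMap ℚ ℂ) := by
    have h : (algebraMap ℚ ℂ).comp (algebraMap ℤ ℚ) = Int.castRingHom ℂ :=
      Subsingleton.elim _ _
    rw [hQ, Polynomial.map_map, h]
  have hdpos : 0 < (minpoly ℚ x).natDegree := minpoly.natDegree_pos hQx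
  set d := (minpoly ℚ x).natDegree with hd
  have hlc : (F.map (Int.castRingHom ℂ)).leadingCoeff = 1 :=
    (hFmonic.map (Int.castRingHom ℂ)).leadingCoeff
  have hcard : Multiset.card ((F.map (Int.castRingHom ℂ)).roots) = d := by
    rw [hmapF]
    exact ((IsAlgClosed.splits ((minpoly ℚ x).map (algebraMap ℚ ℂ))).natDegree_eq_card_roots).symm.trans
      (natDegree_map _)
  have hmem : ∀ a ∈ ((F.map (Int.castRingHom ℂ)).roots.map
      (fun z => max 1 ‖z‖)), 1 ≤ a ∧ a ≤ 2 := by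
    intro a ha
    obtain ⟨z, hz, rfl⟩ := Multiset.mem_map.mp ha
    refine ⟨le_max_left _ _, max_le (by norm_num) ?_⟩
    apply hroots
    rw [aroots_def, ← hmapF]
    exact hz
  obtain ⟨hge, hle⟩ := multiset_prod_le hmem
  have hMF : mahlerMeasure F ≤ 2 ^ d ∧ 1 ≤ mahlerMeasure F := by
    rw [_root_.mahlerMeasure, hlc]
    simp only [map_one, norm_one, one_mul]
    constructor
    · calc ((F.map (Int.castRingHom ℂ)).roots.map (fun z => max 1 ‖z‖)).prod
          ≤ 2 ^ Multiset.card ((F.map (Int.castRingHom ℂ)).roots.map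
              (fun z => max 1 ‖z‖)) := by
            simpa using hle
        _ = 2 ^ d := by rw [Multiset.card_map, hcard]
    · simpa using hge
  have hneg : mahlerMeasure (-F) = mahlerMeasure F := by
    unfold _root_.mahlerMeasure
    rw [Polynomial.map_neg, Polynomial.leadingCoeff_neg, Polynomial.roots_neg,
      norm_neg]
  have hM : mahlerMeasure p.primPart = mahlerMeasure F := by
    rcases hprim with h | h <;> rw [h]
    exact hneg
  rw [weilHeight, ← hp, hM, ← hd]
  have hlog : Real.log (mahlerMeasure F) ≤ (d : ℝ) * Real.log 2 := by
    calc Real.log (mahlerMeasure F) ≤ Real.log (2 ^ d) := by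
          apply Real.log_le_log (by linarith [hMF.2]) hMF.1
      _ = (d : ℝ) * Real.log 2 := by rw [Real.log_pow]
  have h2 : (0:ℝ) < (d : ℝ) := by exact_mod_cast hdpos
  calc ((d : ℝ))⁻¹ * Real.log (mahlerMeasure F)
      ≤ ((d : ℝ))⁻¹ * ((d : ℝ) * Real.log 2) :=
        mul_le_mul_of_nonneg_left hlog (by positivity)
    _ = Real.log 2 := by field_simp
set_option synthInstance.maxHeartbeats 1000000 in
set_option maxHeartbeats 1000000 in
open Polynomial IntermediateField in
lemma abs_root_le {x : Qbar} (hQx : IsIntegral ℚ x) (B : ℝ)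
    (hB : ∀ σ : Qbar →+* ℂ, ‖σ x‖ ≤ B) :
    ∀ z ∈ ((minpoly ℚ x).aroots ℂ), ‖z‖ ≤ B := by
  intro z hz
  haveI hQalg : Algebra.IsAlgebraic ℚ Qbar := AlgebraicClosure.isAlgebraic ℚ
  haveI : Algebra.IsAlgebraic (↥ℚ⟮x⟯) Qbar := Algebra.IsAlgebraic.tower_top (K := ℚ) (L := ↥ℚ⟮x⟯) (A := Qbar)
  let φ : ↥ℚ⟮x⟯ →ₐ[ℚ] ℂ := (IntermediateField.algHomAdjoinIntegralEquiv ℚ hQx).symm ⟨z, hz⟩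
  letI : Algebra (↥ℚ⟮x⟯) ℂ := φ.toRingHom.toAlgebra
  let σ : Qbar →ₐ[↥ℚ⟮x⟯] ℂ := IsAlgClosed.lift
  have hσx : σ.toRingHom x = z := by
    show σ x = z
    have h2 : σ (algebraMap (↥ℚ⟮x⟯) Qbar (IntermediateField.AdjoinSimple.gen ℚ x))
        = algebraMap (↥ℚ⟮x⟯) ℂ (IntermediateField.AdjoinSimple.gen ℚ x) := σ.commutes _
    rw [IntermediateField.AdjoinSimple.algebraMap_gen ℚ x] at h2
    rw [h2]
    exact IntermediateField.algHomAdjoinIntegralEquiv_symm_apply_gen ℚ hQx ⟨z, hz⟩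
  rw [← hσx]
  exact hB σ.toRingHom
open Polynomial in
lemma totient_le_two_mul_degQ {n : ℕ} (hn : 0 < n) {ζ : Qbar} (hprim : IsPrimitiveRoot ζ n) :
    n.totient ≤ 2 * degQ (ζ + ζ⁻¹) := by
  classical
  set x := ζ + ζ⁻¹ with hx
  have hζ0 : ζ ≠ 0 := hprim.ne_zero hn.ne'
  haveI hQalg : Algebra.IsAlgebraic ℚ Qbar := AlgebraicClosure.isAlgebraic ℚ
  have hxQ : IsIntegral ℚ x := Algebra.IsIntegral.isIntegral x
  set f := minpoly ℚ x with hf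
  set d := f.natDegree with hd
  have hdpos : 0 < d := minpoly.natDegree_pos hxQ
  set q : Polynomial ℚ := ∑ i ∈ Finset.range (d+1),
    C (f.coeff i) * (X^2 + C 1)^i * X^(d-i) with hq
  have hxz : ζ^2 + 1 = x * ζ := by
    rw [hx, add_mul, inv_mul_cancel₀ hζ0]
    ring
  have haev : aeval ζ q = 0 := by
    rw [hq]
    simp only [map_sum, map_mul, map_pow, aeval_C, aeval_X, map_add, map_one]
    have hcalc : ∀ i ∈ Finset.range (d+1),
        algebraMap ℚ Qbar (f.coeff i) * (ζ^2+1)^i * ζ^(d-i) = ζ^d * (f.coeff i • x^i) := by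
      intro i hi
      have hid : i + (d - i) = d := by
        have := Finset.mem_range.mp hi; omega
      have hzd : ζ ^ d = ζ^i * ζ^(d-i) := by rw [← pow_add, hid]
      rw [hxz, mul_pow, Algebra.smul_def, hzd]
      ring
    rw [Finset.sum_congr rfl hcalc, ← Finset.mul_sum, ← Polynomial.aeval_eq_sum_range,
      minpoly.aeval, mul_zero]
  have hdvd : minpoly ℚ ζ ∣ q := minpoly.dvd ℚ ζ haev
  -- q ≠ 0 via leading coefficient
  have hmon2 : (X^2 + C 1 : Polynomial ℚ).Monic := Polynomial.monic_X_pow_add_C (1:ℚ) two_ne_zero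
  have hmon : ((X^2 + C 1 : Polynomial ℚ)^d).Monic := hmon2.pow d
  have hndg2 : (X^2 + C 1 : Polynomial ℚ).natDegree = 2 := Polynomial.natDegree_X_pow_add_C
  have hndg : ((X^2 + C 1 : Polynomial ℚ)^d).natDegree = 2*d := by
    rw [Polynomial.natDegree_pow, hndg2, Nat.mul_comm]
  -- coefficient of q at 2*d equals 1
  have hcoeff : q.coeff (2*d) = 1 := by
    rw [hq, Polynomial.finset_sum_coeff]
    rw [Finset.sum_eq_single d]
    · have : C (f.coeff d) * (X^2 + C 1)^d * X^(d-d) = (X^2 + C 1)^d := by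
        have hfd : f.coeff d = 1 := by
          rw [hd]
          exact (minpoly.monic hxQ).coeff_natDegree
        rw [hfd, Nat.sub_self, pow_zero, map_one, one_mul, mul_one]
      rw [this, ← hndg]
      exact hmon.coeff_natDegree
    · intro i hi hine
      apply Polynomial.coeff_eq_zero_of_natDegree_lt
      calc (C (f.coeff i) * (X^2 + C 1)^i * X^(d-i)).natDegree
          ≤ (C (f.coeff i) * (X^2 + C 1)^i).natDegree + (X^(d-i) : Polynomial ℚ).natDegree :=
            Polynomial.natDegree_mul_le
        _ ≤ ((C (f.coeff i)).natDegree + ((X^2 + C 1 : Polynomial ℚ)^i).natDegree) + (d-i) := by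
            gcongr
            · exact Polynomial.natDegree_mul_le
            · exact (Polynomial.natDegree_X_pow _).le
        _ ≤ (0 + 2*i) + (d-i) := by
            gcongr
            · exact (Polynomial.natDegree_C _).le
            · rw [Polynomial.natDegree_pow, hndg2, Nat.mul_comm]
        _ < 2*d := by
            have := Finset.mem_range.mp hi
            omega
    · intro h
      exact absurd (Finset.self_mem_range_succ d) h
  have hq0 : q ≠ 0 := fun h => by simp [h] at hcoeff
  have hqdeg : q.natDegree ≤ 2*d := by
    rw [hq]
    apply Polynomial.natDegree_sum_le_of_forall_le
    intro i hi
    calc (C (f.coeff i) * (X^2 + C 1)^i * X^(d-i)).natDegree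
        ≤ (C (f.coeff i) * (X^2 + C 1)^i).natDegree + (X^(d-i) : Polynomial ℚ).natDegree :=
          Polynomial.natDegree_mul_le
      _ ≤ ((C (f.coeff i)).natDegree + ((X^2 + C 1 : Polynomial ℚ)^i).natDegree) + (d-i) := by
          gcongr
          · exact Polynomial.natDegree_mul_le
          · exact (Polynomial.natDegree_X_pow _).le
      _ ≤ (0 + 2*i) + (d-i) := by
          gcongr
          · exact (Polynomial.natDegree_C _).le
          · rw [Polynomial.natDegree_pow, hndg2, Nat.mul_comm]
      _ ≤ 2*d := by
          have := Finset.mem_range.mp hi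
          omega
  have hmpz : (minpoly ℚ ζ).natDegree = n.totient := by
    rw [← Polynomial.cyclotomic_eq_minpoly_rat hprim hn, Polynomial.natDegree_cyclotomic]
  calc n.totient = (minpoly ℚ ζ).natDegree := hmpz.symm
    _ ≤ q.natDegree := Polynomial.natDegree_le_of_dvd hdvd hq0
    _ ≤ 2*d := hqdeg
    _ = 2 * degQ x := rfl
open Polynomial in
lemma exists_tr (n : ℕ) (hn : 0 < n) :
    ∃ x : Qbar, x ∈ Qtr ∧ weilHeight x ≤ Real.log 2 ∧ n.totient ≤ 2 * degQ x := by
  haveI : NeZero ((n : ℕ) : Qbar) := ⟨Nat.cast_ne_zero.mpr hn.ne'⟩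
  obtain ⟨ζ, hζroot⟩ := IsAlgClosed.exists_root (cyclotomic n Qbar) (by
    rw [degree_cyclotomic]
    exact_mod_cast (Nat.totient_pos.mpr hn).ne')
  have hprim : IsPrimitiveRoot ζ n := (isRoot_cyclotomic_iff).mp hζroot
  have hζn : ζ ^ n = 1 := hprim.pow_eq_one
  have hζ0 : ζ ≠ 0 := hprim.ne_zero hn.ne'
  have habs : ∀ σ : Qbar →+* ℂ, ‖σ ζ‖ = 1 := by
    intro σ
    have hw : σ ζ ^ n = 1 := by rw [← map_pow, hζn, map_one]
    exact Complex.norm_eq_one_of_pow_eq_one hw hn.ne'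
  refine ⟨ζ + ζ⁻¹, ?_, ?_, totient_le_two_mul_degQ hn hprim⟩
  · show ∀ σ : Qbar →+* ℂ, ∃ r : ℝ, σ (ζ + ζ⁻¹) = (r : ℂ)
    intro σ
    exact ⟨2 * (σ ζ).re, by
      rw [map_add, map_inv₀, Complex.inv_eq_conj (habs σ), Complex.add_conj]⟩
  · have hζint : IsIntegral ℤ ζ := ⟨X^n - C 1, monic_X_pow_sub_C 1 hn.ne', by simp [hζn]⟩
    have hinv : ζ⁻¹ = ζ^(n-1) := by
      apply inv_eq_of_mul_eq_one_right
      rw [← pow_succ']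
      have : n - 1 + 1 = n := by omega
      rw [this, hζn]
    have hxint : IsIntegral ℤ (ζ + ζ⁻¹) := by
      rw [hinv]; exact hζint.add (hζint.pow _)
    apply weilHeight_le_log_two hxint
    apply abs_root_le (hxint.tower_top) 2
    intro σ
    rw [map_add, map_inv₀]
    calc ‖σ ζ + (σ ζ)⁻¹‖ ≤ ‖σ ζ‖ + ‖(σ ζ)⁻¹‖ :=
        norm_add_le _ _
      _ = 2 := by rw [norm_inv, habs σ]; norm_num
/-- The Northcott number of the totally real algebraic numbers is at most `log 2`. -/
theorem northcott_Qtr_le_log_two :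
    northcott weilHeight (Qtr : Set Qbar) ≤ ((Real.log 2 : ℝ) : EReal) := by
  rw [northcott]
  have key : ∀ r : ℝ, Real.log 2 < r → (r : EReal) ∈ ((fun r : ℝ => (r : EReal)) ''
      {r : ℝ | 0 ≤ r ∧ {x | x ∈ (Qtr : Set Qbar) ∧ weilHeight x < r}.Infinite}) := by
    intro r hr
    refine ⟨r, ⟨?_, ?_⟩, rfl⟩
    · have := Real.log_nonneg (by norm_num : (1:ℝ) ≤ 2); linarith
    · by_contra hfin
      rw [Set.not_infinite] at hfin
      have himg : (degQ '' {x : Qbar | x ∈ (Qtr : Set Qbar) ∧ weilHeight x < r}).Finite :=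
        hfin.image _
      obtain ⟨N, hN⟩ := himg.bddAbove
      obtain ⟨p, hpge, hp⟩ := Nat.exists_infinite_primes (2*N+3)
      obtain ⟨x, hx1, hx2, hx3⟩ := exists_tr p hp.pos
      have hxT : x ∈ {x : Qbar | x ∈ (Qtr : Set Qbar) ∧ weilHeight x < r} :=
        ⟨hx1, lt_of_le_of_lt hx2 hr⟩
      have hle : degQ x ≤ N := hN (Set.mem_image_of_mem _ hxT)
      rw [Nat.totient_prime hp] at hx3
      omega
  apply le_of_forall_gt_imp_ge_of_dense
  intro c hc
  induction c using EReal.rec with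
  | bot => exact absurd hc (by simp)
  | coe s =>
    have hs : Real.log 2 < s := by exact_mod_cast hc
    exact sInf_le (key s hs)
  | top => exact le_top

end
end

section
/- Let S be the set of CM j-invariants in Q̄. Assume the Brauer–Siegel asymptotics: [ℚ(x):ℚ] = Δ(x)^{1/2+o(1)} and h(x) ≤ π·Δ(x)^{1/2} + C₀ for all CM j-invariants x, where Δ(x) is the absolute discriminant of the CM order and C₀ is an absolute constant. Then for every γ < −1, the weighted height h_γ(x) = deg(x)^γ h(x) tends to 0 along any enumeration of S by increasing discriminant; in particular I(S) = sup{γ : N_{h_γ}(S) = 0} satisfies I(S) ≤ −1. -/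
noncomputable section

/-- Under the Brauer–Siegel asymptotics for CM points, for every `γ < -1` the
weighted Northcott number of the set of CM `j`-invariants is `0`; in particular
`I(S) ≤ -1`. -/
theorem cm_points_weighted_northcott (S : Set Qbar) (Δ : Qbar → ℝ)
    (hS : S.Infinite) (hΔ1 : ∀ x ∈ S, 1 ≤ Δ x)
    (hΔfin : ∀ T : ℝ, {x | x ∈ S ∧ Δ x ≤ T}.Finite)
    (hBS : ∀ ε : ℝ, 0 < ε → ∃ T : ℝ, ∀ x ∈ S, T ≤ Δ x →
      Δ x ^ (1 / 2 - ε) ≤ (degQ x : ℝ) ∧ (degQ x : ℝ) ≤ Δ x ^ (1 / 2 + ε))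
    (C₀ : ℝ) (hh : ∀ x ∈ S, weilHeight x ≤ Real.pi * Δ x ^ (1 / 2 : ℝ) + C₀)
    (γ : ℝ) (hγ : γ < -1) :
    northcott (fun x => (degQ x : ℝ) ^ γ * weilHeight x) S = 0 := by
  -- the key fact: every positive level set is infinite
  have key : ∀ r : ℝ, 0 < r →
      {x | x ∈ S ∧ (degQ x : ℝ) ^ γ * weilHeight x < r}.Infinite := by
    intro r hr
    -- choose a small ε
    have hγ0 : γ < 0 := by linarith
    set ε : ℝ := min (1/4) ((-(γ / 2 + 1 / 2)) / (-2 * γ)) with hε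
    have hε0 : 0 < ε := lt_min (by norm_num) (div_pos (by linarith) (by linarith))
    have hε4 : ε ≤ 1/4 := min_le_left _ _
    have hεa : ε * (-2 * γ) ≤ -(γ / 2 + 1 / 2) := by
      have h2 : ε ≤ (-(γ / 2 + 1 / 2)) / (-2 * γ) := min_le_right _ _
      have h3 : (0:ℝ) < -2 * γ := by linarith
      calc ε * (-2 * γ) ≤ ((-(γ / 2 + 1 / 2)) / (-2 * γ)) * (-2 * γ) := by
            exact mul_le_mul_of_nonneg_right h2 h3.le
        _ = -(γ / 2 + 1 / 2) := div_mul_cancel₀ _ h3.ne'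
    set g : ℝ := γ * (1/2 - ε) with hg
    set e : ℝ := g + 1/2 with he
    have hgneg : g < 0 := mul_neg_of_neg_of_pos hγ0 (by linarith)
    have heneg : e < 0 := by
      rw [he, hg]; nlinarith [hεa]
    obtain ⟨T₁, hT₁⟩ := hBS ε hε0
    -- eventually the bound is below r
    have htend : Filter.Tendsto (fun t : ℝ => Real.pi * t ^ e + |C₀| * t ^ g)
        Filter.atTop (nhds 0) := by
      have h1 : Filter.Tendsto (fun t : ℝ => t ^ e) Filter.atTop (nhds 0) := by
        have := tendsto_rpow_neg_atTop (y := -e) (by linarith)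
        simpa using this
      have h2 : Filter.Tendsto (fun t : ℝ => t ^ g) Filter.atTop (nhds 0) := by
        have := tendsto_rpow_neg_atTop (y := -g) (by linarith)
        simpa using this
      have := (h1.const_mul Real.pi).add (h2.const_mul |C₀|)
      simpa using this
    have hev : ∀ᶠ t in Filter.atTop,
        Real.pi * t ^ e + |C₀| * t ^ g < r :=
      htend.eventually (Filter.Tendsto.eventually_lt_const hr Filter.tendsto_id) |>.mono
        (fun t ht => ht)
    obtain ⟨T₂, hT₂⟩ := Filter.eventually_atTop.mp hev
    -- the big-discriminant part of S
    have hinf : (S \ {x | x ∈ S ∧ Δ x ≤ max T₁ T₂}).Infinite :=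
      hS.diff (hΔfin (max T₁ T₂))
    refine hinf.mono ?_
    rintro x ⟨hxS, hxF⟩
    have hxΔ : max T₁ T₂ < Δ x := by
      by_contra h
      exact hxF ⟨hxS, le_of_not_gt h⟩
    have hxT₁ : T₁ ≤ Δ x := le_trans (le_max_left _ _) hxΔ.le
    have hxT₂ : T₂ ≤ Δ x := le_trans (le_max_right _ _) hxΔ.le
    have hx1 : (1:ℝ) ≤ Δ x := hΔ1 x hxS
    have hx0 : (0:ℝ) < Δ x := by linarith
    obtain ⟨hdlb, _⟩ := hT₁ x hxS hxT₁
    have hdpos : (0:ℝ) < (degQ x : ℝ) :=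
      lt_of_lt_of_le (Real.rpow_pos_of_pos hx0 _) hdlb
    refine ⟨hxS, ?_⟩
    rcases lt_or_ge (weilHeight x) 0 with hw | hw
    · exact lt_trans (mul_neg_of_pos_of_neg (Real.rpow_pos_of_pos hdpos _) hw) hr
    · -- main estimate
      have hdγ : (degQ x : ℝ) ^ γ ≤ Δ x ^ g := by
        have h1 : (degQ x : ℝ) ^ γ ≤ (Δ x ^ (1/2 - ε)) ^ γ :=
          Real.rpow_le_rpow_of_nonpos (Real.rpow_pos_of_pos hx0 _) hdlb hγ0.le
        calc (degQ x : ℝ) ^ γ ≤ (Δ x ^ (1/2 - ε)) ^ γ := h1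
          _ = Δ x ^ g := by
              rw [← Real.rpow_mul hx0.le, hg, mul_comm]
      have hbound : weilHeight x ≤ Real.pi * Δ x ^ (1/2 : ℝ) + C₀ := hh x hxS
      have hΔg0 : (0:ℝ) ≤ Δ x ^ g := (Real.rpow_pos_of_pos hx0 _).le
      calc (degQ x : ℝ) ^ γ * weilHeight x
          ≤ Δ x ^ g * weilHeight x := mul_le_mul_of_nonneg_right hdγ hw
        _ ≤ Δ x ^ g * (Real.pi * Δ x ^ (1/2 : ℝ) + C₀) :=
            mul_le_mul_of_nonneg_left hbound hΔg0
        _ = Real.pi * Δ x ^ e + C₀ * Δ x ^ g := by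
            rw [he, Real.rpow_add hx0]; ring
        _ ≤ Real.pi * Δ x ^ e + |C₀| * Δ x ^ g := by
            have := le_abs_self C₀
            nlinarith
        _ < r := hT₂ (Δ x) hxT₂
  -- compute the infimum
  unfold northcott
  refine le_antisymm ?_ ?_
  · by_contra hcon
    push_neg at hcon
    obtain ⟨b, hb0, hbs⟩ := exists_between hcon
    induction b with
    | bot => exact absurd hb0 (by simp)
    | coe b =>
        have hb0' : (0:ℝ) < b := by exact_mod_cast hb0
        have : (b : EReal) ∈ (fun r : ℝ => (r : EReal)) ''
            {r : ℝ | 0 ≤ r ∧ {x | x ∈ S ∧ (degQ x : ℝ) ^ γ * weilHeight x < r}.Infinite} :=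
          ⟨b, ⟨hb0'.le, key b hb0'⟩, rfl⟩
        exact absurd (csInf_le (OrderBot.bddBelow _) this) (not_le.mpr hbs)
    | top => exact absurd hbs (by simp)
  · refine le_sInf ?_
    rintro b ⟨r, ⟨hr0, -⟩, rfl⟩
    show (0:EReal) ≤ (r : EReal)
    exact_mod_cast hr0

end
end
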